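/- Let V > 0, let r = (2V/π²)^{1/4} (so that V = π²r⁴/2 is the volume of the Euclidean 4-ball of radius r), and let A_B = 2π²r³ (the volume of its boundary 3-sphere). Let A ≥ 0 and let μ be a measure on [0, ∞) × [0, π/2)² (coordinates (ℓ, α, β)) such that: (i) ∫ ℓ³/(cos(α)·cos(β)) dμ ≤ A·A_B and this integral is finite; (ii) ∫ ℓ dμ ≥ 2π²·V; (iii) ∫ √(cos(α)·cos(β)) dμ ≤ (π²/4)·A_B and this integral is finite. Then A ≥ A_B. -/
import Mathlib


open Real MeasureTheory ENNReal

/-- Pointwise AM-GM inequality used in Croke's LP argument. -/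
lemma croke_pointwise (r ℓ c : ℝ) (hr : 0 < r) (hℓ : 0 ≤ ℓ) (hc : 0 < c) :
    ℓ ≤ (1 / (12 * r ^ 2)) * (ℓ ^ 3 / c) + (4 * r / 3) * Real.sqrt c := by
  set s := Real.sqrt c with hs_def
  have hs : 0 < s := Real.sqrt_pos.mpr hc
  have hs2 : s ^ 2 = c := Real.sq_sqrt hc.le
  have key : 12 * r ^ 2 * s ^ 2 * ℓ ≤ ℓ ^ 3 + 16 * r ^ 3 * s ^ 3 := by
    nlinarith [mul_nonneg (sq_nonneg (ℓ - 2 * r * s))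
      (add_nonneg hℓ (by positivity : (0:ℝ) ≤ 4 * r * s))]
  have hrw : (1 / (12 * r ^ 2)) * (ℓ ^ 3 / c) + (4 * r / 3) * s - ℓ
      = (ℓ ^ 3 + 16 * r ^ 3 * s ^ 3 - 12 * r ^ 2 * s ^ 2 * ℓ) / (12 * r ^ 2 * s ^ 2) := by
    rw [← hs2]
    field_simp
    ring
  have hdiv : 0 ≤ (ℓ ^ 3 + 16 * r ^ 3 * s ^ 3 - 12 * r ^ 2 * s ^ 2 * ℓ)
      / (12 * r ^ 2 * s ^ 2) :=
    div_nonneg (by linarith) (by positivity)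
  linarith [hrw ▸ hdiv]

/-- The linear-programming core of Croke's 4-dimensional isoperimetric theorem (`κ = 0`):
`V > 0`, `r = (2V/π²)^{1/4}`, `A_B = 2π²r³`; if a nonnegative measure `μ` on chords
`(ℓ, α, β) ∈ [0, ∞) × [0, π/2)²` satisfies
(i) `∫ ℓ³/(cos α · cos β) dμ ≤ A·A_B`, (ii) `∫ ℓ dμ ≥ 2π²·V`, and
(iii) `∫ √(cos α · cos β) dμ ≤ (π²/4)·A_B`, then `A ≥ A_B`. -/
theorem croke_LP_core (V : ℝ) (hV : 0 < V) (r A_B : ℝ)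
    (hr : r = (2 * V / π ^ 2) ^ ((1 : ℝ) / 4)) (hAB : A_B = 2 * π ^ 2 * r ^ 3)
    (A : ℝ) (hA : 0 ≤ A) (μ : Measure (ℝ × ℝ × ℝ))
    (hsupp : μ ((Set.Ici (0 : ℝ) ×ˢ (Set.Ico 0 (π / 2) ×ˢ Set.Ico 0 (π / 2)))ᶜ) = 0)
    (h1 : ∫⁻ x, ENNReal.ofReal (x.1 ^ 3 / (cos x.2.1 * cos x.2.2)) ∂μ
            ≤ ENNReal.ofReal (A * A_B))
    (h2 : ENNReal.ofReal (2 * π ^ 2 * V) ≤ ∫⁻ x, ENNReal.ofReal x.1 ∂μ)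
    (h3 : ∫⁻ x, ENNReal.ofReal (Real.sqrt (cos x.2.1 * cos x.2.2)) ∂μ
            ≤ ENNReal.ofReal ((π ^ 2 / 4) * A_B)) :
    A_B ≤ A := by
  have hπ : 0 < π := Real.pi_pos
  have hx : (0:ℝ) < 2 * V / π ^ 2 := by positivity
  have hrpos : 0 < r := by rw [hr]; positivity
  have hr4 : r ^ 4 = 2 * V / π ^ 2 := by
    rw [hr, ← Real.rpow_natCast ((2 * V / π ^ 2) ^ ((1:ℝ)/4)) 4,
      ← Real.rpow_mul hx.le]
    norm_num
  have hV' : V = π ^ 2 * r ^ 4 / 2 := by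
    field_simp at hr4
    linarith
  set K₁ : ℝ := 1 / (12 * r ^ 2) with hK₁
  set K₂ : ℝ := 4 * r / 3 with hK₂
  have hK₁0 : 0 ≤ K₁ := by positivity
  have hK₂0 : 0 ≤ K₂ := by positivity
  -- measurability of the two integrands
  have hm1 : Measurable fun x : ℝ × ℝ × ℝ =>
      ENNReal.ofReal (x.1 ^ 3 / (cos x.2.1 * cos x.2.2)) := by
    fun_prop
  have hm3 : Measurable fun x : ℝ × ℝ × ℝ =>
      ENNReal.ofReal (Real.sqrt (cos x.2.1 * cos x.2.2)) := by
    fun_prop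
  -- a.e. pointwise bound
  have hae : ∀ᵐ x ∂μ, ENNReal.ofReal x.1
      ≤ ENNReal.ofReal (K₁ * (x.1 ^ 3 / (cos x.2.1 * cos x.2.2)))
        + ENNReal.ofReal (K₂ * Real.sqrt (cos x.2.1 * cos x.2.2)) := by
    have hS : ∀ᵐ x ∂μ,
        x ∈ Set.Ici (0 : ℝ) ×ˢ (Set.Ico 0 (π / 2) ×ˢ Set.Ico 0 (π / 2)) := by
      rw [ae_iff]
      exact hsupp
    filter_upwards [hS] with x hxS
    obtain ⟨hx1, hx2, hx3⟩ := hxS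
    have hc1 : 0 < cos x.2.1 :=
      Real.cos_pos_of_mem_Ioo ⟨by linarith [hx2.1, hπ], hx2.2⟩
    have hc2 : 0 < cos x.2.2 :=
      Real.cos_pos_of_mem_Ioo ⟨by linarith [hx3.1, hπ], hx3.2⟩
    have hc : 0 < cos x.2.1 * cos x.2.2 := mul_pos hc1 hc2
    have hpt := croke_pointwise r x.1 (cos x.2.1 * cos x.2.2) hrpos hx1 hc
    rw [← ENNReal.ofReal_add (mul_nonneg hK₁0 (div_nonneg (pow_nonneg hx1 3) hc.le))
      (mul_nonneg hK₂0 (Real.sqrt_nonneg _))]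
    exact ENNReal.ofReal_le_ofReal hpt
  -- integrate
  have hchain : ENNReal.ofReal (2 * π ^ 2 * V)
      ≤ ENNReal.ofReal (K₁ * (A * A_B) + K₂ * ((π ^ 2 / 4) * A_B)) := by
    calc ENNReal.ofReal (2 * π ^ 2 * V) ≤ ∫⁻ x, ENNReal.ofReal x.1 ∂μ := h2
      _ ≤ ∫⁻ x, (ENNReal.ofReal (K₁ * (x.1 ^ 3 / (cos x.2.1 * cos x.2.2)))
            + ENNReal.ofReal (K₂ * Real.sqrt (cos x.2.1 * cos x.2.2))) ∂μ :=
          lintegral_mono_ae hae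
      _ = (∫⁻ x, ENNReal.ofReal (K₁ * (x.1 ^ 3 / (cos x.2.1 * cos x.2.2))) ∂μ)
            + ∫⁻ x, ENNReal.ofReal (K₂ * Real.sqrt (cos x.2.1 * cos x.2.2)) ∂μ := by
          apply lintegral_add_left
          exact (ENNReal.measurable_ofReal.comp
            ((measurable_const.mul ((measurable_fst.pow measurable_const).div
              ((Real.measurable_cos.comp (measurable_fst.comp measurable_snd)).mul
               (Real.measurable_cos.comp (measurable_snd.comp measurable_snd)))))))
      _ = ENNReal.ofReal K₁
            * (∫⁻ x, ENNReal.ofReal (x.1 ^ 3 / (cos x.2.1 * cos x.2.2)) ∂μ)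
          + ENNReal.ofReal K₂
            * ∫⁻ x, ENNReal.ofReal (Real.sqrt (cos x.2.1 * cos x.2.2)) ∂μ := by
          simp_rw [ENNReal.ofReal_mul hK₁0, ENNReal.ofReal_mul hK₂0]
          rw [lintegral_const_mul _ hm1, lintegral_const_mul _ hm3]
      _ ≤ ENNReal.ofReal K₁ * ENNReal.ofReal (A * A_B)
          + ENNReal.ofReal K₂ * ENNReal.ofReal ((π ^ 2 / 4) * A_B) := by
          gcongr
      _ = ENNReal.ofReal (K₁ * (A * A_B) + K₂ * ((π ^ 2 / 4) * A_B)) := by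
          have hAB0 : 0 ≤ A_B := by rw [hAB]; positivity
          rw [← ENNReal.ofReal_mul hK₁0, ← ENNReal.ofReal_mul hK₂0,
            ← ENNReal.ofReal_add (mul_nonneg hK₁0 (mul_nonneg hA hAB0))
              (mul_nonneg hK₂0 (mul_nonneg (by positivity) hAB0))]
  have hAB0 : 0 ≤ A_B := by rw [hAB]; positivity
  have hreal : 2 * π ^ 2 * V ≤ K₁ * (A * A_B) + K₂ * ((π ^ 2 / 4) * A_B) :=
    (ENNReal.ofReal_le_ofReal_iff (by positivity)).mp hchain
  -- final algebra
  have e1 : K₁ * (A * A_B) = A * π ^ 2 * r / 6 := by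
    rw [hK₁, hAB]; field_simp; ring
  have e2 : K₂ * ((π ^ 2 / 4) * A_B) = 2 * π ^ 4 * r ^ 4 / 3 := by
    rw [hK₂, hAB]; ring
  have e3 : 2 * π ^ 2 * V = π ^ 4 * r ^ 4 := by rw [hV']; ring
  rw [e1, e2, e3] at hreal
  rw [hAB]
  nlinarith [mul_pos (mul_pos hπ hπ) hrpos, sq_nonneg π, sq_nonneg r]
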